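/- arXiv:1612.06120 — 2 statements merged into one kernel-verified Lean document; each statement's English description precedes it below -/
import Mathlib

section
/- Consider a star network matrix A ∈ ℝ^{n×n} with A_{1j} = a_{1j} and A_{j1} = a_{j1} for j = 2,…,n, diagonal entries a_{ii}, and all other off-diagonal entries zero; output C = e₁^T. Suppose x ∈ ℂ^n with ‖x‖ = 1, x₁ = 0, and (A+Δ)x = λx for some λ ∈ ℂ and some Δ supported on the star pattern. If the support of (x₂,…,x_n) is a singleton {i}, then necessarily Δ_{1,i} = −a_{1,i} and λ = a_{ii} + Δ_{ii}. -/
/-- For a star network (nonzero entries only on the first row,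
first column and diagonal), a perturbed eigenvector with unit norm, first
component zero, and support `{i₀}` among the non-hub entries forces
`Δ_{1,i₀} = −a_{1,i₀}` and `λ = a_{i₀i₀} + Δ_{i₀i₀}`. -/
theorem star_network_singleton_support (n : ℕ) (hn : 3 ≤ n)
    (A Δ : Matrix (Fin n) (Fin n) ℝ)
    (hstarA : ∀ i j : Fin n, i ≠ j → (i : ℕ) ≠ 0 → (j : ℕ) ≠ 0 → A i j = 0)
    (hstarΔ : ∀ i j : Fin n, i ≠ j → (i : ℕ) ≠ 0 → (j : ℕ) ≠ 0 → Δ i j = 0)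
    (lam : ℂ) (x : Fin n → ℂ)
    (hnorm : ∑ i, ‖x i‖ ^ 2 = 1)
    (hx0 : x ⟨0, by omega⟩ = 0)
    (heig : ((A + Δ).map (Complex.ofReal)).mulVec x = lam • x)
    (i₀ : Fin n) (hi₀ : (i₀ : ℕ) ≠ 0)
    (hsupp : ∀ j : Fin n, x j ≠ 0 ↔ j = i₀) :
    Δ ⟨0, by omega⟩ i₀ = -A ⟨0, by omega⟩ i₀ ∧
      lam = Complex.ofReal (A i₀ i₀ + Δ i₀ i₀) := by
  set e0 : Fin n := ⟨0, by omega⟩ with he0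
  have hxi₀ : x i₀ ≠ 0 := (hsupp i₀).mpr rfl
  have hxj : ∀ j : Fin n, j ≠ i₀ → x j = 0 := by
    intro j hj
    by_contra h
    exact hj ((hsupp j).mp h)
  have hrow : ∀ i : Fin n,
      (Complex.ofReal ((A + Δ) i i₀)) * x i₀ = lam * x i := by
    intro i
    have := congrFun heig i
    simp only [Matrix.mulVec, dotProduct, Matrix.map_apply,
      Pi.smul_apply, smul_eq_mul] at this
    rw [← this]
    rw [Finset.sum_eq_single i₀]
    · intro b _ hb; rw [hxj b hb, mul_zero]
    · intro h; exact absurd (Finset.mem_univ i₀) h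
  constructor
  · have h0 := hrow e0
    rw [hx0, mul_zero] at h0
    have : (Complex.ofReal ((A + Δ) e0 i₀)) = 0 :=
      (mul_eq_zero.mp h0).resolve_right hxi₀
    have h2 : (A + Δ) e0 i₀ = 0 := by exact_mod_cast this
    simp only [Matrix.add_apply] at h2
    linarith
  · have h0 := hrow i₀
    have := mul_right_cancel₀ hxi₀ h0
    rw [← this]
    simp [Matrix.add_apply]
end

section
/- Let α and γ be independent nonnegative random variables with survival functions Pr(α ≥ x) = (1−x)^{n−1} on [0,1] and Pr(γ ≥ x) = (1−(n−2)√2 x)^{n−1} on [0, 1/(√2(n−2))]. Then δ = min{α, γ} satisfies 1/(√2 n(n−1)) ≤ 𝔼[δ] ≤ 1/(√2 n(n−2)) for n ≥ 3. -/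
open MeasureTheory ProbabilityTheory

lemma integral_lin_pow (k : ℝ) (hk : 0 < k) (n : ℕ) (hn : 1 ≤ n) :
    ∫ t in Set.Ioc (0:ℝ) (1/k), (1 - k*t)^(n-1) = 1/(k*n) := by
  rw [← intervalIntegral.integral_of_le (by positivity : (0:ℝ) ≤ 1/k)]
  have hderiv : ∀ t ∈ Set.uIcc (0:ℝ) (1/k),
      HasDerivAt (fun t : ℝ => -(1 - k*t)^n / (k*n)) ((1 - k*t)^(n-1)) t := by
    intro t _
    have h1 : HasDerivAt (fun t : ℝ => 1 - k*t) (-k) t := by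
      simpa using ((hasDerivAt_id t).const_mul k).const_sub 1
    have h2 := (h1.pow n).neg.div_const (k*n)
    refine h2.congr_deriv ?_
    have hn0 : (n:ℝ) ≠ 0 := Nat.cast_ne_zero.mpr (by omega)
    rw [div_eq_iff (mul_ne_zero hk.ne' hn0)]
    ring
  rw [intervalIntegral.integral_eq_sub_of_hasDerivAt hderiv (by
    apply Continuous.intervalIntegrable; continuity)]
  have hn0 : (n:ℝ) ≠ 0 := Nat.cast_ne_zero.mpr (by omega)
  have : 1 - k * (1/k) = 0 := by field_simp; ring
  rw [this, zero_pow (by omega)]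
  field_simp
  simp

/-- For independent nonnegative `α, γ` with survival functions
`(1−x)^{n−1}` on `[0,1]` and `(1−(n−2)√2·x)^{n−1}` on `[0, 1/(√2(n−2))]`,
the minimum `δ = min{α,γ}` satisfies
`1/(√2 n(n−1)) ≤ 𝔼[δ] ≤ 1/(√2 n(n−2))` for `n ≥ 3`. -/
theorem star_radius_expectation_bounds {Ω : Type*} [MeasurableSpace Ω]
    (P : Measure Ω) [IsProbabilityMeasure P] (n : ℕ) (hn : 3 ≤ n)
    (α γ : Ω → ℝ) (hαm : Measurable α) (hγm : Measurable γ)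
    (hα0 : ∀ ω, 0 ≤ α ω) (hγ0 : ∀ ω, 0 ≤ γ ω)
    (hindep : IndepFun α γ P)
    (hαsurv : ∀ x : ℝ, 0 ≤ x → x ≤ 1 →
      P {ω | x ≤ α ω} = ENNReal.ofReal ((1 - x) ^ (n - 1)))
    (hαsurv' : ∀ x : ℝ, 1 < x → P {ω | x ≤ α ω} = 0)
    (hγsurv : ∀ x : ℝ, 0 ≤ x → x ≤ 1 / (Real.sqrt 2 * (n - 2)) →
      P {ω | x ≤ γ ω} = ENNReal.ofReal ((1 - (n - 2) * Real.sqrt 2 * x) ^ (n - 1)))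
    (hγsurv' : ∀ x : ℝ, 1 / (Real.sqrt 2 * (n - 2)) < x → P {ω | x ≤ γ ω} = 0)
    (δ : Ω → ℝ) (hδ : ∀ ω, δ ω = min (α ω) (γ ω)) :
    1 / (Real.sqrt 2 * n * (n - 1)) ≤ ∫ ω, δ ω ∂P ∧
      ∫ ω, δ ω ∂P ≤ 1 / (Real.sqrt 2 * n * (n - 2)) := by
  have hs2 : 1 < Real.sqrt 2 := by
    rw [show (1:ℝ) = Real.sqrt 1 from (Real.sqrt_one).symm]
    exact Real.sqrt_lt_sqrt (by norm_num) (by norm_num)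
  have hs2' : 0 < Real.sqrt 2 := by linarith
  have hn2 : (1:ℝ) ≤ (n:ℝ) - 2 := by
    have : (3:ℝ) ≤ n := by exact_mod_cast hn
    linarith
  set c : ℝ := Real.sqrt 2 * ((n:ℝ) - 2) with hc_def
  have hc1 : 1 < c := by nlinarith
  have hc0 : 0 < c := by linarith
  set b : ℝ := 1 / c with hb_def
  have hb0 : 0 < b := by positivity
  have hb1 : b < 1 := by
    rw [hb_def, div_lt_one hc0]; exact hc1
  -- γ is a.e. bounded by b
  have hγb : ∀ᵐ ω ∂P, γ ω ≤ b := by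
    rw [ae_iff]
    have hsub : {ω | ¬ γ ω ≤ b} ⊆ ⋃ k : ℕ, {ω | b + 1/(k+1) ≤ γ ω} := by
      intro ω hω
      simp only [Set.mem_setOf_eq, not_le] at hω
      obtain ⟨k, hk⟩ := exists_nat_one_div_lt (sub_pos.mpr hω)
      exact Set.mem_iUnion.mpr ⟨k, by simp only [Set.mem_setOf_eq]; linarith⟩
    refine measure_mono_null hsub (measure_iUnion_null fun k => ?_)
    refine hγsurv' _ ?_
    have : (0:ℝ) < 1/((k:ℝ)+1) := by positivity
    linarith
  have hδm : Measurable δ := by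
    have : δ = fun ω => min (α ω) (γ ω) := funext hδ
    rw [this]; exact hαm.min hγm
  have hδ0 : ∀ ω, 0 ≤ δ ω := fun ω => by rw [hδ]; exact le_min (hα0 ω) (hγ0 ω)
  have hδb : ∀ᵐ ω ∂P, δ ω ≤ b := by
    filter_upwards [hγb] with ω hω
    rw [hδ]; exact (min_le_right _ _).trans hω
  have hδint : Integrable δ P := by
    refine Integrable.mono' (integrable_const b) hδm.aestronglyMeasurable ?_
    filter_upwards [hδb] with ω hω
    rw [Real.norm_eq_abs, abs_of_nonneg (hδ0 ω)]; exact hω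
  -- layer cake
  have hlc : ∫ ω, δ ω ∂P
      = ∫ t in Set.Ioc 0 b, (P {ω | t ≤ δ ω}).toReal := by
    exact hδint.integral_eq_integral_Ioc_meas_le (Filter.Eventually.of_forall hδ0) hδb
  -- pointwise identity on Ioc 0 b
  have hpt : ∀ t ∈ Set.Ioc (0:ℝ) b,
      (P {ω | t ≤ δ ω}).toReal = (1 - t)^(n-1) * (1 - c*t)^(n-1) := by
    intro t ht
    obtain ⟨ht0, htb⟩ := ht
    have hset : {ω | t ≤ δ ω} = α ⁻¹' Set.Ici t ∩ γ ⁻¹' Set.Ici t := by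
      ext ω; simp [hδ, le_min_iff, Set.mem_Ici]
    have hmul := hindep.measure_inter_preimage_eq_mul (Set.Ici t) (Set.Ici t)
      measurableSet_Ici measurableSet_Ici
    have hα' : P (α ⁻¹' Set.Ici t) = ENNReal.ofReal ((1 - t) ^ (n - 1)) := by
      rw [show α ⁻¹' Set.Ici t = {ω | t ≤ α ω} from rfl]
      exact hαsurv t ht0.le (htb.trans hb1.le)
    have hγ' : P (γ ⁻¹' Set.Ici t) = ENNReal.ofReal ((1 - c*t) ^ (n - 1)) := by
      rw [show γ ⁻¹' Set.Ici t = {ω | t ≤ γ ω} from rfl]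
      rw [hγsurv t ht0.le htb]
      congr 3
      rw [hc_def]; ring
    have h1t : 0 ≤ 1 - t := by linarith
    have hct : 0 ≤ 1 - c*t := by
      have : c * t ≤ c * b := by exact mul_le_mul_of_nonneg_left htb hc0.le
      have hcb : c * b = 1 := by rw [hb_def]; field_simp
      linarith
    rw [hset, hmul, hα', hγ', ← ENNReal.ofReal_mul (by positivity)]
    rw [ENNReal.toReal_ofReal (by positivity)]
  have hlc2 : ∫ ω, δ ω ∂P
      = ∫ t in Set.Ioc 0 b, (1 - t)^(n-1) * (1 - c*t)^(n-1) := by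
    rw [hlc]
    exact setIntegral_congr_fun measurableSet_Ioc hpt
  have hn1 : 1 ≤ n - 1 := by omega
  have hncast : ((n - 1 : ℕ) : ℝ) = (n : ℝ) - 1 := by
    have : 1 ≤ n := by omega
    push_cast [this]; ring
  have hcl : ∀ k : ℝ, Continuous fun t : ℝ => (1 - k*t)^(n-1) :=
    fun k => (continuous_const.sub (continuous_const.mul continuous_id)).pow _
  have hco : Continuous fun t : ℝ => (1 - t)^(n-1) * (1 - c*t)^(n-1) :=
    ((continuous_const.sub continuous_id).pow _).mul
      ((continuous_const.sub (continuous_const.mul continuous_id)).pow _)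
  constructor
  · -- lower bound
    set m : ℝ := 1 / (1 + c) with hm_def
    have hm0 : 0 < m := by positivity
    have hmb : m ≤ b := by
      rw [hm_def, hb_def]
      exact one_div_le_one_div_of_le hc0 (by linarith)
    have step1 : ∫ t in Set.Ioc (0:ℝ) m, (1 - (1+c)*t)^(n-1)
        ≤ ∫ t in Set.Ioc (0:ℝ) m, (1 - t)^(n-1) * (1 - c*t)^(n-1) := by
      refine setIntegral_mono_on ?_ ?_ measurableSet_Ioc ?_
      · exact (hcl _).integrableOn_Ioc
      · exact hco.integrableOn_Ioc
      · intro t ht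
        obtain ⟨ht0, htm⟩ := ht
        have h1 : 0 ≤ 1 - (1+c)*t := by
          have : (1+c) * t ≤ (1+c) * m := mul_le_mul_of_nonneg_left htm (by positivity)
          have : (1+c) * m = 1 := by rw [hm_def]; field_simp
          nlinarith [mul_le_mul_of_nonneg_left htm (by positivity : (0:ℝ) ≤ 1+c)]
        have h2 : 1 - (1+c)*t ≤ (1 - t) * (1 - c*t) := by nlinarith [mul_nonneg hc0.le (mul_self_nonneg t)]
        calc (1 - (1+c)*t)^(n-1) ≤ ((1 - t) * (1 - c*t))^(n-1) :=
              pow_le_pow_left₀ h1 h2 _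
          _ = (1 - t)^(n-1) * (1 - c*t)^(n-1) := mul_pow _ _ _
    have step2 : ∫ t in Set.Ioc (0:ℝ) m, (1 - t)^(n-1) * (1 - c*t)^(n-1)
        ≤ ∫ t in Set.Ioc (0:ℝ) b, (1 - t)^(n-1) * (1 - c*t)^(n-1) := by
      refine setIntegral_mono_set hco.integrableOn_Ioc ?_ ?_
      · rw [Filter.EventuallyLE]
        refine (ae_restrict_iff' measurableSet_Ioc).mpr (Filter.Eventually.of_forall ?_)
        intro t ht
        obtain ⟨ht0, htb⟩ := ht
        have hct : 0 ≤ 1 - c*t := by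
          have hcb : c * b = 1 := by rw [hb_def]; field_simp
          nlinarith [mul_le_mul_of_nonneg_left htb hc0.le]
        have h1t : 0 ≤ 1 - t := by linarith
        positivity
      · exact HasSubset.Subset.eventuallyLE (Set.Ioc_subset_Ioc_right hmb)
    have hval : ∫ t in Set.Ioc (0:ℝ) m, (1 - (1+c)*t)^(n-1) = 1/((1+c)*n) := by
      have := integral_lin_pow (1+c) (by linarith) n (by omega)
      rw [hm_def]; exact this
    have hfinal : 1 / (Real.sqrt 2 * n * (n - 1)) ≤ 1/((1+c)*n) := by
      have hnr : (0:ℝ) < n := by positivity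
      refine one_div_le_one_div_of_le (by positivity) ?_
      have : 1 + c ≤ Real.sqrt 2 * ((n:ℝ) - 1) := by
        rw [hc_def]; nlinarith
      calc (1+c)*(n:ℝ) ≤ Real.sqrt 2 * ((n:ℝ)-1) * n :=
            mul_le_mul_of_nonneg_right this hnr.le
        _ = Real.sqrt 2 * n * ((n:ℝ)-1) := by ring
    rw [hlc2]
    calc (1:ℝ) / (Real.sqrt 2 * n * (n - 1)) ≤ 1/((1+c)*n) := hfinal
      _ = _ := hval.symm
      _ ≤ _ := step1
      _ ≤ _ := step2
  · -- upper bound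
    have step1 : ∫ t in Set.Ioc (0:ℝ) b, (1 - t)^(n-1) * (1 - c*t)^(n-1)
        ≤ ∫ t in Set.Ioc (0:ℝ) b, (1 - c*t)^(n-1) := by
      refine setIntegral_mono_on hco.integrableOn_Ioc
        (hcl _).integrableOn_Ioc measurableSet_Ioc ?_
      intro t ht
      obtain ⟨ht0, htb⟩ := ht
      have hct : 0 ≤ 1 - c*t := by
        have hcb : c * b = 1 := by rw [hb_def]; field_simp
        nlinarith [mul_le_mul_of_nonneg_left htb hc0.le]
      have h1t : 0 ≤ 1 - t := by linarith
      have h1t' : 1 - t ≤ 1 := by linarith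
      calc (1 - t)^(n-1) * (1 - c*t)^(n-1)
          ≤ 1 * (1 - c*t)^(n-1) := by
            exact mul_le_mul_of_nonneg_right (pow_le_one₀ h1t h1t') (by positivity)
        _ = (1 - c*t)^(n-1) := one_mul _
    have hval : ∫ t in Set.Ioc (0:ℝ) b, (1 - c*t)^(n-1) = 1/(c*n) := by
      have := integral_lin_pow c hc0 n (by omega)
      rw [hb_def]; exact this
    have hfinal : 1/(c*n) ≤ 1 / (Real.sqrt 2 * n * (n - 2)) := by
      have : c * (n:ℝ) = Real.sqrt 2 * n * ((n:ℝ) - 2) := by rw [hc_def]; ring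
      rw [this]
    rw [hlc2]
    calc _ ≤ _ := step1
      _ = 1/(c*n) := hval
      _ ≤ _ := hfinal
end
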